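/- Fix an integer m ≥ 1. For every x ∈ [0,1], the minimal moment function w_m^x satisfies the uniform norm bound ∫_0^1 w_m^x(z)² dz ≤ m². -/

import Mathlib

open MeasureTheory

/-- The `m × m` Hilbert matrix `H_m = (1/(i+j-1))_{i,j=1}^m` (0-indexed here). -/
noncomputable def hilbertMatrix (m : ℕ) : Matrix (Fin m) (Fin m) ℝ :=
  fun i j => 1 / ((i.1 : ℝ) + (j.1 : ℝ) + 1)

open Polynomial intervalIntegral

noncomputable section MinimalMomentAux
lemma pint (p : ℝ[X]) (a b : ℝ) : IntervalIntegrable (fun x => p.eval x) MeasureTheory.volume a b :=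
  p.continuous.intervalIntegrable a b

lemma pftc (p : ℝ[X]) (a b : ℝ) :
    ∫ x in a..b, (derivative p).eval x = p.eval b - p.eval a := by
  have h : (fun x => (derivative p).eval x) = deriv (fun x => p.eval x) := by
    funext x; exact (Polynomial.deriv p).symm
  rw [h]
  refine integral_deriv_eq_sub (fun x _ => (p.hasDerivAt x).differentiableAt) ?_
  rw [← h]; exact pint _ a b

def Fp (k : ℕ) : ℝ[X] := X^k * (X - 1)^k


lemma deriv_helper (a : ℕ) (G : ℝ[X]) :
    derivative (X^(a+1) * (X - 1)^(a+1) * G) =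
    X^a * (X - 1)^a * ((C ((a:ℝ)+1)) * ((X-1) * G + X * G) + X * (X-1) * derivative G) := by
  simp only [derivative_mul, derivative_pow, derivative_X, derivative_one, derivative_sub]
  push_cast
  ring

lemma Fp_struct (k : ℕ) : ∀ j ≤ k, ∃ G : ℝ[X],
    derivative^[j] (Fp k) = X^(k-j) * (X - 1)^(k-j) * G := by
  intro j
  induction j with
  | zero => intro _; exact ⟨1, by simp [Fp]⟩
  | succ j ih =>
    intro hj
    obtain ⟨G, hG⟩ := ih (le_of_lt (Nat.lt_of_succ_le hj))
    have ha : k - j = (k - (j+1)) + 1 := by omega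
    refine ⟨(C ((((k - (j+1):ℕ)):ℝ) + 1)) * ((X-1) * G + X * G) + X * (X-1) * derivative G, ?_⟩
    rw [Function.iterate_succ_apply', hG, ha, ← deriv_helper]

lemma Fp_eval_zero {k j : ℕ} (h : j < k) : (derivative^[j] (Fp k)).eval 0 = 0 := by
  obtain ⟨G, hG⟩ := Fp_struct k j h.le
  have : 0 < k - j := by omega
  rw [hG]
  simp [zero_pow this.ne']

lemma Fp_eval_one {k j : ℕ} (h : j < k) : (derivative^[j] (Fp k)).eval 1 = 0 := by
  obtain ⟨G, hG⟩ := Fp_struct k j h.le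
  have : 0 < k - j := by omega
  rw [hG]
  simp [zero_pow this.ne']

lemma Fp_orth (k : ℕ) : ∀ i, ∀ j, i < j → j ≤ k →
    ∫ x in (0:ℝ)..1, x^i * (derivative^[j] (Fp k)).eval x = 0 := by
  intro i
  induction i with
  | zero =>
    intro j hij hjk
    have hj : j - 1 + 1 = j := by omega
    have : (derivative^[j] (Fp k)) = derivative (derivative^[j-1] (Fp k)) := by
      conv_lhs => rw [← hj]
      rw [Function.iterate_succ_apply']
    simp only [pow_zero, one_mul, this]
    rw [pftc]
    rw [Fp_eval_one (by omega), Fp_eval_zero (by omega)]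
    ring
  | succ i ih =>
    intro j hij hjk
    set P := derivative^[j-1] (Fp k) with hP
    have hj : j - 1 + 1 = j := by omega
    have hD : (derivative^[j] (Fp k)) = derivative P := by
      conv_lhs => rw [← hj]
      rw [Function.iterate_succ_apply']
    have key : ∀ x : ℝ, x^(i+1) * (derivative^[j] (Fp k)).eval x
        = (derivative (X^(i+1) * P)).eval x - ((i:ℝ)+1) * (x^i * P.eval x) := by
      intro x
      rw [hD]
      simp only [derivative_mul, derivative_X_pow, eval_add, eval_mul, eval_pow, eval_X,
        eval_natCast, eval_C, eval_mul, Nat.add_sub_cancel]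
      push_cast
      ring
    have h1 : IntervalIntegrable (fun x : ℝ => (derivative (X^(i+1) * P)).eval x)
        MeasureTheory.volume 0 1 := pint _ 0 1
    have h2 : IntervalIntegrable (fun x : ℝ => x^i * P.eval x) MeasureTheory.volume 0 1 := by
      have := pint (X^i * P) 0 1
      simpa using this
    calc ∫ x in (0:ℝ)..1, x^(i+1) * (derivative^[j] (Fp k)).eval x
        = ∫ x in (0:ℝ)..1, ((derivative (X^(i+1) * P)).eval x - ((i:ℝ)+1) * (x^i * P.eval x)) := by
          simp_rw [key]
      _ = (∫ x in (0:ℝ)..1, (derivative (X^(i+1) * P)).eval x)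
          - ((i:ℝ)+1) * ∫ x in (0:ℝ)..1, x^i * P.eval x := by
          rw [integral_sub h1 (h2.const_mul _), intervalIntegral.integral_const_mul]
      _ = 0 := by
          rw [pftc, hP]
          have e1 : (derivative^[j-1] (Fp k)).eval 1 = 0 := Fp_eval_one (by omega)
          have e0 : (derivative^[j-1] (Fp k)).eval 0 = 0 := Fp_eval_zero (by omega)
          have eI : ∫ x in (0:ℝ)..1, x^i * (derivative^[j-1] (Fp k)).eval x = 0 :=
            ih (j-1) (by omega) (by omega)
          simp [e1, e0, eI]

lemma Fp_expand (k : ℕ) :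
    Fp k = ∑ i ∈ Finset.range (k+1), C ((k.choose i : ℝ)) * (X - 1)^(k+i) := by
  have hX : (X : ℝ[X])^k = ∑ i ∈ Finset.range (k+1), (X-1)^i * (k.choose i : ℝ[X]) := by
    have := add_pow (X - 1 : ℝ[X]) 1 k
    simpa using this
  rw [Fp, hX, Finset.sum_mul]
  refine Finset.sum_congr rfl fun i _ => ?_
  rw [pow_add]
  push_cast
  rw [C_eq_natCast]
  ring

lemma Fp_eval_one_top (k j : ℕ) (h1 : k ≤ j) :
    (derivative^[j] (Fp k)).eval 1 = (k.choose (j-k) : ℝ) * (j.factorial : ℝ) := by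
  have hC : (X - 1 : ℝ[X]) = X - C 1 := by simp
  rw [Fp_expand, iterate_derivative_sum]
  simp_rw [iterate_derivative_C_mul, hC, iterate_derivative_X_sub_pow, eval_finset_sum]
  rw [Finset.sum_eq_single (j - k)]
  · simp only [eval_mul, eval_C, eval_smul, smul_eq_mul, eval_pow, eval_sub, eval_X, eval_one]
    by_cases hle : j - k ≤ k
    · have : k + (j - k) - j = 0 := by omega
      have h2 : k + (j - k) = j := by omega
      rw [this, h2]
      simp [Nat.descFactorial_self]
    · have : k.choose (j - k) = 0 := Nat.choose_eq_zero_of_lt (by omega)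
      simp [this]
  · intro i _ hne
    simp only [eval_mul, eval_C, eval_smul, smul_eq_mul, eval_pow, eval_sub, eval_X, eval_one]
    by_cases hlt : k + i < j
    · have : (k+i).descFactorial j = 0 := Nat.descFactorial_eq_zero_iff_lt.mpr hlt
      simp [this]
    · have : 0 < k + i - j := by omega
      rw [sub_self, zero_pow this.ne']
      ring
  · intro hnot
    have : k.choose (j - k) = 0 := Nat.choose_eq_zero_of_lt (by simp at hnot; omega)
    simp [this]

lemma Fp_expand' (k : ℕ) :
    Fp k = ∑ i ∈ Finset.range (k+1), C ((-1:ℝ)^(k-i) * (k.choose i)) * X^(k+i) := by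
  have hX : (X - 1 : ℝ[X])^k = ∑ i ∈ Finset.range (k+1), X^i * (-1:ℝ[X])^(k-i) * (k.choose i : ℝ[X]) := by
    have := add_pow (X : ℝ[X]) (-1) k
    simpa [sub_eq_add_neg] using this
  rw [Fp, hX, Finset.mul_sum]
  refine Finset.sum_congr rfl fun i _ => ?_
  rw [pow_add, map_mul, ← C_1, ← C_neg, ← C_pow, C_eq_natCast]
  push_cast
  ring

lemma Fp_eval_zero_self (k : ℕ) :
    (derivative^[k] (Fp k)).eval 0 = (-1:ℝ)^k * (k.factorial : ℝ) := by
  rw [Fp_expand', iterate_derivative_sum]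
  simp_rw [iterate_derivative_C_mul, iterate_derivative_X_pow_eq_smul, eval_finset_sum]
  rw [Finset.sum_eq_single 0]
  · simp [Nat.descFactorial_self]
    ring
  · intro i _ hne
    simp only [eval_mul, eval_C, eval_smul, smul_eq_mul, eval_pow, eval_X]
    have : 0 < k + i - k := by omega
    rw [zero_pow this.ne']
    ring
  · simp

def Qp (k : ℕ) : ℝ[X] := derivative^[k] (Fp k)

lemma Qp_eval_one (k : ℕ) : (Qp k).eval 1 = (k.factorial : ℝ) := by
  have := Fp_eval_one_top k k le_rfl
  simpa [Qp] using this

lemma Qp_eval_zero (k : ℕ) : (Qp k).eval 0 = (-1:ℝ)^k * (k.factorial : ℝ) :=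
  Fp_eval_zero_self k

lemma deriv_Qp_eval_one (k : ℕ) :
    (derivative (Qp k)).eval 1 = (k : ℝ) * ((k+1).factorial : ℝ) := by
  have h : derivative (Qp k) = derivative^[k+1] (Fp k) :=
    (Function.iterate_succ_apply' derivative k (Fp k)).symm
  rw [h, Fp_eval_one_top k (k+1) (by omega)]
  simp

lemma Qp_orth (k i : ℕ) (h : i < k) : ∫ x in (0:ℝ)..1, x^i * (Qp k).eval x = 0 :=
  Fp_orth k i k h le_rfl

lemma Qp_natDegree (k : ℕ) : (Qp k).natDegree ≤ k := by
  have h1 : (Fp k).natDegree ≤ 2*k := by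
    refine (natDegree_mul_le).trans ?_
    have : ((X - 1 : ℝ[X])^k).natDegree ≤ k := by
      refine (natDegree_pow_le).trans ?_
      have : (X - 1 : ℝ[X]).natDegree ≤ 1 := by
        simpa using natDegree_X_sub_C_le (1:ℝ)
      nlinarith
    simp only [natDegree_X_pow]
    omega
  have := Polynomial.natDegree_iterate_derivative (Fp k) k
  unfold Qp
  omega

set_option maxHeartbeats 1000000 in
lemma parts (i : ℕ) (P : ℝ[X]) :
    ∫ x in (0:ℝ)..1, x^i * (derivative P).eval x
      = P.eval 1 - (0:ℝ)^i * P.eval 0 - i * ∫ x in (0:ℝ)..1, x^(i-1) * P.eval x := by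
  have key : ∀ x : ℝ, x^i * (derivative P).eval x
      = (derivative (X^i * P)).eval x - (i:ℝ) * (x^(i-1) * P.eval x) := by
    intro x
    rcases Nat.eq_zero_or_pos i with hi | hi
    · subst hi; simp
    · simp only [derivative_mul, derivative_X_pow, eval_add, eval_mul, eval_pow, eval_X,
        eval_natCast, eval_C]
      ring
  have h1 : IntervalIntegrable (fun x : ℝ => (derivative (X^i * P)).eval x)
      MeasureTheory.volume 0 1 := pint _ 0 1
  have h2 : IntervalIntegrable (fun x : ℝ => x^(i-1) * P.eval x) MeasureTheory.volume 0 1 := by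
    have := pint (X^(i-1) * P) 0 1
    simpa using this
  calc ∫ x in (0:ℝ)..1, x^i * (derivative P).eval x
      = ∫ x in (0:ℝ)..1, ((derivative (X^i * P)).eval x - (i:ℝ) * (x^(i-1) * P.eval x)) := by
        simp_rw [key]
    _ = (∫ x in (0:ℝ)..1, (derivative (X^i * P)).eval x)
        - (i:ℝ) * ∫ x in (0:ℝ)..1, x^(i-1) * P.eval x := by
        rw [integral_sub h1 (h2.const_mul _), intervalIntegral.integral_const_mul]
    _ = _ := by rw [pftc]; simp

def bpoly (m : ℕ) : ℝ[X] :=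
  C (2⁻¹ * (((m-1).factorial : ℝ))⁻¹) * derivative (Qp (m-1))
    + C (2⁻¹ * ((m.factorial : ℝ))⁻¹) * derivative (Qp m)

lemma bpoly_natDegree {m : ℕ} (hm : 1 ≤ m) : (bpoly m).natDegree < m := by
  have h1 : (derivative (Qp (m-1))).natDegree ≤ m - 1 :=
    (natDegree_derivative_le _).trans (by have := Qp_natDegree (m-1); omega)
  have h2 : (derivative (Qp m)).natDegree ≤ m - 1 := by
    have := natDegree_derivative_le (Qp m)
    have := Qp_natDegree m
    omega
  refine lt_of_le_of_lt (natDegree_add_le _ _) ?_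
  have b1 := natDegree_C_mul_le (2⁻¹ * (((m-1).factorial : ℝ))⁻¹) (derivative (Qp (m-1)))
  have b2 := natDegree_C_mul_le (2⁻¹ * ((m.factorial : ℝ))⁻¹) (derivative (Qp m))
  simp only [max_lt_iff]
  omega

lemma bpoly_eval_one {m : ℕ} (hm : 1 ≤ m) : (bpoly m).eval 1 = (m:ℝ)^2 := by
  have hs : m - 1 + 1 = m := by omega
  have hc : ((m-1 : ℕ) : ℝ) = (m : ℝ) - 1 := by
    push_cast [hm]
    ring
  have e1 : (derivative (Qp (m-1))).eval 1 = ((m:ℝ)-1) * (m.factorial : ℝ) := by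
    rw [deriv_Qp_eval_one, hs, hc]
  have e2 : (derivative (Qp m)).eval 1 = (m : ℝ) * ((m+1).factorial : ℝ) :=
    deriv_Qp_eval_one m
  have hf1 : ((m-1).factorial : ℝ) ≠ 0 := Nat.cast_ne_zero.mpr (Nat.factorial_ne_zero _)
  have hf2 : ((m).factorial : ℝ) ≠ 0 := Nat.cast_ne_zero.mpr (Nat.factorial_ne_zero _)
  have hm1 : (m.factorial : ℝ) = (m : ℝ) * ((m-1).factorial : ℝ) := by
    conv_lhs => rw [← hs]
    rw [Nat.factorial_succ]
    push_cast [hs]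
    ring
  have hm2 : ((m+1).factorial : ℝ) = ((m:ℝ)+1) * (m.factorial : ℝ) := by
    rw [Nat.factorial_succ]; push_cast; ring
  simp only [bpoly, eval_add, eval_mul, eval_C, e1, e2]
  rw [hm2, hm1]
  have hm0 : (m:ℝ) ≠ 0 := Nat.cast_ne_zero.mpr (by omega)
  field_simp
  ring

lemma intmul (i : ℕ) (P : ℝ[X]) :
    IntervalIntegrable (fun x : ℝ => x^i * P.eval x) MeasureTheory.volume 0 1 := by
  have := pint (X^i * P) 0 1
  simpa using this

lemma I1mono {m : ℕ} (hm : 1 ≤ m) {i : ℕ} (hi : i < m) :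
    ∫ x in (0:ℝ)..1, x^i * (bpoly m).eval x = 1 := by
  set c1 : ℝ := 2⁻¹ * (((m-1).factorial : ℝ))⁻¹ with hc1
  set c2 : ℝ := 2⁻¹ * ((m.factorial : ℝ))⁻¹ with hc2
  have key : ∀ x : ℝ, x^i * (bpoly m).eval x
      = c1 * (x^i * (derivative (Qp (m-1))).eval x) + c2 * (x^i * (derivative (Qp m)).eval x) := by
    intro x
    simp only [bpoly, eval_add, eval_mul, eval_C, hc1, hc2]
    ring
  have ho1 : (i:ℝ) * ∫ x in (0:ℝ)..1, x^(i-1) * (Qp (m-1)).eval x = 0 := by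
    rcases Nat.eq_zero_or_pos i with h | h
    · simp [h]
    · rw [Qp_orth (m-1) (i-1) (by omega)]; ring
  have ho2 : (i:ℝ) * ∫ x in (0:ℝ)..1, x^(i-1) * (Qp m).eval x = 0 := by
    rcases Nat.eq_zero_or_pos i with h | h
    · simp [h]
    · rw [Qp_orth m (i-1) (by omega)]; ring
  have hf1 : ((m-1).factorial : ℝ) ≠ 0 := Nat.cast_ne_zero.mpr (Nat.factorial_ne_zero _)
  have hf2 : ((m).factorial : ℝ) ≠ 0 := Nat.cast_ne_zero.mpr (Nat.factorial_ne_zero _)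
  have hsgn : (-1:ℝ)^m = -(-1:ℝ)^(m-1) := by
    conv_lhs => rw [show m = (m-1) + 1 by omega]
    rw [pow_succ]
    ring
  calc ∫ x in (0:ℝ)..1, x^i * (bpoly m).eval x
      = ∫ x in (0:ℝ)..1, (c1 * (x^i * (derivative (Qp (m-1))).eval x)
          + c2 * (x^i * (derivative (Qp m)).eval x)) := by simp_rw [key]
    _ = c1 * (∫ x in (0:ℝ)..1, x^i * (derivative (Qp (m-1))).eval x)
        + c2 * (∫ x in (0:ℝ)..1, x^i * (derivative (Qp m)).eval x) := by
        rw [integral_add ((intmul i _).const_mul _) ((intmul i _).const_mul _),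
          intervalIntegral.integral_const_mul, intervalIntegral.integral_const_mul]
    _ = c1 * ((Qp (m-1)).eval 1 - (0:ℝ)^i * (Qp (m-1)).eval 0)
        + c2 * ((Qp m).eval 1 - (0:ℝ)^i * (Qp m).eval 0) := by
        rw [parts, parts]
        rw [sub_eq_add_neg (_ - _), sub_eq_add_neg (_ - _), ho1, ho2]
        ring
    _ = 1 := by
        rw [Qp_eval_one, Qp_eval_one, Qp_eval_zero, Qp_eval_zero, hsgn, hc1, hc2]
        field_simp
        ring

lemma intpq (p q : ℝ[X]) :
    IntervalIntegrable (fun x : ℝ => p.eval x * q.eval x) MeasureTheory.volume 0 1 := by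
  have := pint (p * q) 0 1
  simpa using this

lemma I1gen {m : ℕ} (hm : 1 ≤ m) (p : ℝ[X]) (hp : p.natDegree < m) :
    ∫ x in (0:ℝ)..1, p.eval x * (bpoly m).eval x = p.eval 1 := by
  have hev : ∀ x : ℝ, p.eval x = ∑ i ∈ Finset.range m, p.coeff i * x^i :=
    fun x => eval_eq_sum_range' hp x
  calc ∫ x in (0:ℝ)..1, p.eval x * (bpoly m).eval x
      = ∫ x in (0:ℝ)..1, ∑ i ∈ Finset.range m, p.coeff i * (x^i * (bpoly m).eval x) := by
        simp_rw [hev, Finset.sum_mul, mul_assoc]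
    _ = ∑ i ∈ Finset.range m, p.coeff i * ∫ x in (0:ℝ)..1, x^i * (bpoly m).eval x := by
        rw [integral_finset_sum (fun i _ => ((intmul i (bpoly m)).const_mul _))]
        exact Finset.sum_congr rfl fun i _ => intervalIntegral.integral_const_mul _ _
    _ = ∑ i ∈ Finset.range m, p.coeff i := by
        refine Finset.sum_congr rfl fun i hi => ?_
        rw [I1mono hm (Finset.mem_range.mp hi)]
        ring
    _ = p.eval 1 := by rw [hev 1]; simp

lemma bsq {m : ℕ} (hm : 1 ≤ m) :
    ∫ x in (0:ℝ)..1, (bpoly m).eval x ^ 2 = (m:ℝ)^2 := by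
  have h := I1gen hm (bpoly m) (bpoly_natDegree hm)
  rw [bpoly_eval_one hm] at h
  simpa [sq] using h

lemma star {m : ℕ} (hm : 1 ≤ m) (p : ℝ[X]) (hp : p.natDegree < m) :
    p.eval 1 ^ 2 ≤ (m:ℝ)^2 * ∫ x in (0:ℝ)..1, p.eval x ^ 2 := by
  set c : ℝ := (m:ℝ)^2 with hc
  set t : ℝ := p.eval 1 with ht
  have hcpos : 0 < c := by
    rw [hc]
    have : (0:ℝ) < (m:ℝ) := by exact_mod_cast hm
    positivity
  have key : 0 ≤ ∫ x in (0:ℝ)..1, (c * p.eval x - t * (bpoly m).eval x)^2 :=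
    intervalIntegral.integral_nonneg (by norm_num) (fun x _ => sq_nonneg _)
  have expand : ∫ x in (0:ℝ)..1, (c * p.eval x - t * (bpoly m).eval x)^2
      = c^2 * (∫ x in (0:ℝ)..1, p.eval x ^ 2)
        - 2*c*t*(∫ x in (0:ℝ)..1, p.eval x * (bpoly m).eval x)
        + t^2 * (∫ x in (0:ℝ)..1, (bpoly m).eval x ^ 2) := by
    have hpp := intpq p p
    have hpb := intpq p (bpoly m)
    have hbb := intpq (bpoly m) (bpoly m)
    simp only [sq] at *
    calc ∫ x in (0:ℝ)..1, (c * p.eval x - t * (bpoly m).eval x) * (c * p.eval x - t * (bpoly m).eval x)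
        = ∫ x in (0:ℝ)..1, ((c*c) * (p.eval x * p.eval x)
            - (2*c*t) * (p.eval x * (bpoly m).eval x)
            + (t*t) * ((bpoly m).eval x * (bpoly m).eval x)) := by
          congr 1; funext x; ring
      _ = _ := by
          rw [integral_add (((hpp.const_mul _).sub (hpb.const_mul _))) (hbb.const_mul _),
            integral_sub (hpp.const_mul _) (hpb.const_mul _),
            intervalIntegral.integral_const_mul, intervalIntegral.integral_const_mul, intervalIntegral.integral_const_mul]
  rw [expand, I1gen hm p hp, bsq hm, ← hc, ← ht] at key
  nlinarith [key, hcpos]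

lemma starScaled {m : ℕ} (hm : 1 ≤ m) (p : ℝ[X]) (hp : p.natDegree < m)
    {y : ℝ} (hy : 0 ≤ y) :
    y * p.eval y ^ 2 ≤ (m:ℝ)^2 * ∫ x in (0:ℝ)..y, p.eval x ^ 2 := by
  rcases hy.eq_or_lt with h | h
  · simp [← h]
  · set q : ℝ[X] := p.comp (C y * X) with hq
    have hqd : q.natDegree < m := by
      rw [hq, natDegree_comp]
      have : (C y * X).natDegree ≤ 1 := natDegree_C_mul_le _ _ |>.trans (by simp)
      calc p.natDegree * (C y * X).natDegree ≤ p.natDegree * 1 := Nat.mul_le_mul_left _ this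
        _ < m := by simpa using hp
    have hqe : ∀ t : ℝ, q.eval t = p.eval (y * t) := by
      intro t; rw [hq, eval_comp]; simp
    have hsub : ∫ x in (0:ℝ)..1, q.eval x ^ 2 = y⁻¹ * ∫ x in (0:ℝ)..y, p.eval x ^ 2 := by
      have := intervalIntegral.integral_comp_mul_left (a := (0:ℝ)) (b := 1)
        (fun t => p.eval t ^ 2) h.ne'
      simp only [mul_zero, mul_one] at this
      simp_rw [hqe]
      rw [this, smul_eq_mul]
    have := star hm q hqd
    rw [hsub, hqe 1, mul_one] at this
    calc y * p.eval y ^ 2 ≤ y * ((m:ℝ)^2 * (y⁻¹ * ∫ x in (0:ℝ)..y, p.eval x ^ 2)) := by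
          exact mul_le_mul_of_nonneg_left this hy
      _ = (m:ℝ)^2 * ∫ x in (0:ℝ)..y, p.eval x ^ 2 := by
          field_simp

lemma starRefl {m : ℕ} (hm : 1 ≤ m) (p : ℝ[X]) (hp : p.natDegree < m)
    {x : ℝ} (hx : x ≤ 1) :
    (1 - x) * p.eval x ^ 2 ≤ (m:ℝ)^2 * ∫ t in x..(1:ℝ), p.eval t ^ 2 := by
  set r : ℝ[X] := p.comp (C 1 - X) with hr
  have hrd : r.natDegree < m := by
    rw [hr, natDegree_comp]
    have h1 : (C (1:ℝ) - X).natDegree = 1 := by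
      rw [show (C (1:ℝ) - X) = -(X - C 1) by ring, natDegree_neg, natDegree_X_sub_C]
    rw [h1, mul_one]; exact hp
  have hre : ∀ t : ℝ, r.eval t = p.eval (1 - t) := by
    intro t; rw [hr, eval_comp]; simp
  have key := starScaled hm r hrd (sub_nonneg.mpr hx)
  rw [hre] at key
  simp only [sub_sub_cancel] at key
  have hsub : ∫ t in (0:ℝ)..(1-x), r.eval t ^ 2 = ∫ t in x..(1:ℝ), p.eval t ^ 2 := by
    simp_rw [hre]
    have := intervalIntegral.integral_comp_sub_left (a := (0:ℝ)) (b := 1-x)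
      (fun t => p.eval t ^ 2) 1
    simp only [sub_zero, sub_sub_cancel] at this
    rw [this]
  rw [hsub] at key
  exact key

lemma starPoint {m : ℕ} (hm : 1 ≤ m) (p : ℝ[X]) (hp : p.natDegree < m)
    {x : ℝ} (hx0 : 0 ≤ x) (hx1 : x ≤ 1) :
    p.eval x ^ 2 ≤ (m:ℝ)^2 * ∫ t in (0:ℝ)..1, p.eval t ^ 2 := by
  have h1 := starScaled hm p hp hx0
  have h2 := starRefl hm p hp hx1
  have hint : (∫ t in (0:ℝ)..x, p.eval t ^ 2) + (∫ t in x..(1:ℝ), p.eval t ^ 2)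
      = ∫ t in (0:ℝ)..1, p.eval t ^ 2 := by
    apply intervalIntegral.integral_add_adjacent_intervals
    · exact ((p.continuous.pow 2).intervalIntegrable 0 x)
    · exact ((p.continuous.pow 2).intervalIntegrable x 1)
  nlinarith [h1, h2, hint]


end MinimalMomentAux

set_option maxHeartbeats 2000000 in
/-- For every `x ∈ [0,1]`, the minimal moment function `w_m^x` satisfies
`∫_0^1 w_m^x(z)² dz ≤ m²`. -/
theorem minimal_moment_function_norm_bound
    (m : ℕ) (hm : 1 ≤ m) (x : ℝ) (hx : x ∈ Set.Icc (0 : ℝ) 1)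
    (α : Fin m → ℝ)
    (hα : (hilbertMatrix m).mulVec α = fun i => x ^ (i.1)) :
    (∫ z in Set.Icc (0 : ℝ) 1, (∑ i : Fin m, α i * z ^ (i.1)) ^ 2) ≤ (m : ℝ) ^ 2 := by
  classical
  set p : ℝ[X] := ∑ i : Fin m, C (α i) * X^(i.1 : ℕ) with hpdef
  have hpe : ∀ z : ℝ, p.eval z = ∑ i : Fin m, α i * z ^ (i.1) := by
    intro z
    rw [hpdef, eval_finset_sum]
    exact Finset.sum_congr rfl fun i _ => by simp
  have hpd : p.natDegree < m := by
    have h1 : p.natDegree ≤ m - 1 := by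
      rw [hpdef]
      refine natDegree_sum_le_of_forall_le _ _ fun i _ => ?_
      refine (natDegree_C_mul_le _ _).trans ?_
      rw [natDegree_X_pow]
      omega
    omega
  have hIcc : (∫ z in Set.Icc (0:ℝ) 1, (∑ i : Fin m, α i * z ^ (i.1)) ^ 2)
      = ∫ z in (0:ℝ)..1, p.eval z ^ 2 := by
    rw [intervalIntegral.integral_of_le (by norm_num : (0:ℝ) ≤ 1),
      ← MeasureTheory.integral_Icc_eq_integral_Ioc]
    refine MeasureTheory.setIntegral_congr_fun (by measurability) fun z _ => ?_
    rw [hpe]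
  set S : ℝ := ∫ z in (0:ℝ)..1, p.eval z ^ 2 with hS
  have hSnn : 0 ≤ S :=
    intervalIntegral.integral_nonneg (by norm_num) (fun z _ => sq_nonneg _)
  -- S equals the Hilbert quadratic form, which equals p.eval x by hα
  have hSval : S = p.eval x := by
    have hint : ∀ (i j : Fin m), ∫ z in (0:ℝ)..1, α i * α j * z ^ ((i.1) + (j.1))
        = α i * α j * (1 / ((i.1 : ℝ) + (j.1 : ℝ) + 1)) := by
      intro i j
      rw [intervalIntegral.integral_const_mul, integral_pow]
      push_cast
      ring
    have hptwise : ∀ z : ℝ, p.eval z ^ 2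
        = ∑ i : Fin m, ∑ j : Fin m, α i * α j * z ^ ((i.1) + (j.1)) := by
      intro z
      rw [hpe, sq, Finset.sum_mul_sum]
      exact Finset.sum_congr rfl fun i _ => Finset.sum_congr rfl fun j _ => by
        rw [pow_add]; ring
    have hintg : ∀ (i j : Fin m), IntervalIntegrable
        (fun z : ℝ => α i * α j * z^((i.1)+(j.1))) MeasureTheory.volume 0 1 :=
      fun i j => ((continuous_const.mul (continuous_pow _)).intervalIntegrable 0 1)
    have hform : S = ∑ i : Fin m, ∑ j : Fin m, α i * α j * (1 / ((i.1 : ℝ) + (j.1 : ℝ) + 1)) := by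
      rw [hS]
      simp_rw [hptwise]
      calc ∫ z in (0:ℝ)..1, ∑ i : Fin m, ∑ j : Fin m, α i * α j * z ^ ((i.1) + (j.1))
          = ∑ i : Fin m, ∫ z in (0:ℝ)..1, ∑ j : Fin m, α i * α j * z ^ ((i.1) + (j.1)) :=
            intervalIntegral.integral_finset_sum
              (fun i _ => (continuous_finset_sum _ (fun j _ =>
                continuous_const.mul (continuous_pow _))).intervalIntegrable 0 1)
        _ = ∑ i : Fin m, ∑ j : Fin m, ∫ z in (0:ℝ)..1, α i * α j * z ^ ((i.1) + (j.1)) :=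
            Finset.sum_congr rfl fun i _ =>
              intervalIntegral.integral_finset_sum (fun j _ => hintg i j)
        _ = ∑ i : Fin m, ∑ j : Fin m, α i * α j * (1 / ((i.1 : ℝ) + (j.1 : ℝ) + 1)) :=
            Finset.sum_congr rfl fun i _ => Finset.sum_congr rfl fun j _ => hint i j
    -- use hα
    have hrow : ∀ i : Fin m, ∑ j : Fin m, (1 / ((i.1 : ℝ) + (j.1 : ℝ) + 1)) * α j = x ^ (i.1) := by
      intro i
      have := congrFun hα i
      simpa [Matrix.mulVec, dotProduct, hilbertMatrix] using this
    rw [hform, hpe]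
    refine Finset.sum_congr rfl fun i _ => ?_
    rw [← hrow i, Finset.mul_sum]
    exact Finset.sum_congr rfl fun j _ => by ring
  -- main inequality
  have key := starPoint hm p hpd hx.1 hx.2
  rw [← hS, ← hSval] at key
  rw [hIcc]
  nlinarith [key, hSnn]
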